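/- Let (a,b) be a fictitious-play trajectory. Let n ≥ 7 and let t_1 < t_2 < … < t_n be rounds such that ρ_{t_{i+1}} ≥ ⌊ρ_{t_i}⌋ + 1 for every i ∈ {1,…,n−1}. Then t_n − t_1 > n²/10. -/
import Mathlib


open MeasureTheory

/-- Bob's choice of the left or right piece. -/
inductive Choice
  | L
  | R
deriving DecidableEq

/-- The cumulative valuation `V(x) = ∫_0^x v`. -/
noncomputable def cumul (v : ℝ → ℝ) (x : ℝ) : ℝ := ∫ y in (0:ℝ)..x, v y

/-- `v` is an integrable value density on `[0,1]`, bounded between `lo` and `hi`,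
integrating to `1`. -/
def IsDensity (lo hi : ℝ) (v : ℝ → ℝ) : Prop :=
  IntervalIntegrable v volume 0 1 ∧
  (∀ x ∈ Set.Icc (0:ℝ) 1, lo ≤ v x ∧ v x ≤ hi) ∧
  (∫ y in (0:ℝ)..1, v y) = 1

/-- Alice's round-`t` utility: if Bob picks `L` she gets `[a_t,1]`, else `[0,a_t]`. -/
noncomputable def uA (vA : ℝ → ℝ) (a : ℕ → ℝ) (b : ℕ → Choice) (t : ℕ) : ℝ :=
  if b t = Choice.L then 1 - cumul vA (a t) else cumul vA (a t)

/-- Bob's round-`t` utility: if he picks `L` he gets `[0,a_t]`, else `[a_t,1]`. -/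
noncomputable def uB (vB : ℝ → ℝ) (a : ℕ → ℝ) (b : ℕ → Choice) (t : ℕ) : ℝ :=
  if b t = Choice.L then cumul vB (a t) else 1 - cumul vB (a t)

/-- `α_t = r_t − ℓ_t`: number of `R` choices minus number of `L` choices up to round `t`. -/
noncomputable def alphaFP (b : ℕ → Choice) (t : ℕ) : ℝ :=
  ∑ i ∈ Finset.Icc 1 t, (if b i = Choice.R then (1:ℝ) else -1)

/-- `β_t = Σ_{i=1}^t (2 V_B(a_i) − 1)`. -/
noncomputable def betaFP (vB : ℝ → ℝ) (a : ℕ → ℝ) (t : ℕ) : ℝ :=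
  ∑ i ∈ Finset.Icc 1 t, (2 * cumul vB (a i) - 1)

/-- The radius `ρ_t = |α_t| + |β_t|`. -/
noncomputable def rhoFP (vB : ℝ → ℝ) (a : ℕ → ℝ) (b : ℕ → Choice) (t : ℕ) : ℝ :=
  |alphaFP b t| + |betaFP vB a t|

/-- `(a,b)` is a fictitious-play trajectory. -/
def IsFictitiousPlay (vB : ℝ → ℝ) (a : ℕ → ℝ) (b : ℕ → Choice) : Prop :=
  ∀ t : ℕ,
    (0 < alphaFP b t → a (t+1) = 1) ∧
    (alphaFP b t < 0 → a (t+1) = 0) ∧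
    (0 < betaFP vB a t → b (t+1) = Choice.L) ∧
    (betaFP vB a t < 0 → b (t+1) = Choice.R)

/-- Round `t` is axis-crossing. -/
def AxisCrossing (vB : ℝ → ℝ) (a : ℕ → ℝ) (b : ℕ → Choice) (t : ℕ) : Prop :=
  alphaFP b t = 0 ∨
  (betaFP vB a t ≤ 0 ∧ 0 < betaFP vB a (t+1)) ∨
  (0 ≤ betaFP vB a t ∧ betaFP vB a (t+1) < 0)

lemma cumul_zero (vB : ℝ → ℝ) : cumul vB 0 = 0 := intervalIntegral.integral_same

lemma cumul_one {δ Δ : ℝ} {vB : ℝ → ℝ} (hB : IsDensity δ Δ vB) : cumul vB 1 = 1 := hB.2.2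

lemma cumul_nonneg {δ Δ : ℝ} (hδ : 0 ≤ δ) {vB : ℝ → ℝ} (hB : IsDensity δ Δ vB)
    {x : ℝ} (hx : x ∈ Set.Icc (0:ℝ) 1) : 0 ≤ cumul vB x := by
  apply intervalIntegral.integral_nonneg hx.1
  intro u hu
  exact le_trans hδ (hB.2.1 u ⟨hu.1, hu.2.trans hx.2⟩).1

lemma cumul_le_one {δ Δ : ℝ} (hδ : 0 ≤ δ) {vB : ℝ → ℝ} (hB : IsDensity δ Δ vB)
    {x : ℝ} (hx : x ∈ Set.Icc (0:ℝ) 1) : cumul vB x ≤ 1 := by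
  have h01 : (0:ℝ) ≤ 1 := zero_le_one
  have h1 : IntervalIntegrable vB volume 0 x := hB.1.mono_set (by
    rw [Set.uIcc_of_le hx.1, Set.uIcc_of_le h01]
    exact Set.Icc_subset_Icc le_rfl hx.2)
  have h2 : IntervalIntegrable vB volume x 1 := hB.1.mono_set (by
    rw [Set.uIcc_of_le hx.2, Set.uIcc_of_le h01]
    exact Set.Icc_subset_Icc hx.1 le_rfl)
  have hadd := intervalIntegral.integral_add_adjacent_intervals h1 h2
  have hpos : 0 ≤ ∫ y in x..(1:ℝ), vB y :=
    intervalIntegral.integral_nonneg hx.2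
      (fun u hu => le_trans hδ (hB.2.1 u ⟨le_trans hx.1 hu.1, hu.2⟩).1)
  have h1' := hB.2.2
  unfold cumul
  linarith

lemma alphaFP_zero (b : ℕ → Choice) : alphaFP b 0 = 0 := by simp [alphaFP]

lemma betaFP_zero (vB : ℝ → ℝ) (a : ℕ → ℝ) : betaFP vB a 0 = 0 := by simp [betaFP]

lemma alphaFP_succ (b : ℕ → Choice) (t : ℕ) :
    alphaFP b (t+1) = alphaFP b t + (if b (t+1) = Choice.R then 1 else -1) := by
  unfold alphaFP
  rw [Finset.sum_Icc_succ_top (by omega : 1 ≤ t+1)]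

lemma betaFP_succ (vB : ℝ → ℝ) (a : ℕ → ℝ) (t : ℕ) :
    betaFP vB a (t+1) = betaFP vB a t + (2 * cumul vB (a (t+1)) - 1) := by
  unfold betaFP
  rw [Finset.sum_Icc_succ_top (by omega : 1 ≤ t+1)]

lemma alphaFP_int (b : ℕ → Choice) (t : ℕ) : ∃ k : ℤ, alphaFP b t = k := by
  induction t with
  | zero => exact ⟨0, by simp [alphaFP_zero]⟩
  | succ t ih =>
    obtain ⟨k, hk⟩ := ih
    rw [alphaFP_succ, hk]
    by_cases h : b (t+1) = Choice.R
    · exact ⟨k + 1, by simp [h]⟩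
    · exact ⟨k - 1, by simp [h]; push_cast; ring⟩
section Trav

variable {δ Δ : ℝ} {vB : ℝ → ℝ} {a : ℕ → ℝ} {b : ℕ → Choice}

/-- Traversal of the quadrant `α > 0, β > 0`. -/
lemma travNE (hB : IsDensity δ Δ vB) (hfp : IsFictitiousPlay vB a b) (s j : ℕ)
    (hA : (j:ℝ) ≤ alphaFP b s) (hBs : 0 < betaFP vB a s) :
    (∀ k ≤ j, alphaFP b (s+k) = alphaFP b s - k ∧ betaFP vB a (s+k) = betaFP vB a s + k) ∧
    (∀ k < j, ¬ AxisCrossing vB a b (s+k)) := by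
  have main : ∀ k ≤ j, alphaFP b (s+k) = alphaFP b s - k ∧
      betaFP vB a (s+k) = betaFP vB a s + k := by
    intro k hk
    induction k with
    | zero => simp
    | succ k ih =>
      obtain ⟨hAk, hBk⟩ := ih (by omega)
      have hkj : (k:ℝ) + 1 ≤ j := by exact_mod_cast hk
      have hApos : 0 < alphaFP b (s+k) := by rw [hAk]; linarith
      have hBpos : 0 < betaFP vB a (s+k) := by rw [hBk]; positivity
      have ha1 : a (s+k+1) = 1 := (hfp (s+k)).1 hApos
      have hbL : b (s+k+1) = Choice.L := (hfp (s+k)).2.2.1 hBpos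
      constructor
      · rw [show s+(k+1) = (s+k)+1 by ring, alphaFP_succ, hbL, hAk]
        simp; push_cast; ring
      · rw [show s+(k+1) = (s+k)+1 by ring, betaFP_succ, ha1, cumul_one hB, hBk]
        push_cast; ring
  refine ⟨main, fun k hk hcr => ?_⟩
  obtain ⟨hAk, hBk⟩ := main k (le_of_lt hk)
  obtain ⟨_, hBk1⟩ := main (k+1) hk
  have hkj : (k:ℝ) + 1 ≤ j := by exact_mod_cast hk
  have h1 : 0 < alphaFP b (s+k) := by rw [hAk]; linarith
  have h2 : 0 < betaFP vB a (s+k) := by rw [hBk]; positivity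
  have h3 : 0 < betaFP vB a (s+k+1) := by
    rw [show s+k+1 = s+(k+1) by ring, hBk1]; push_cast; positivity
  rcases hcr with h | ⟨h, _⟩ | ⟨_, h⟩ <;> linarith

/-- Traversal of the quadrant `α < 0, β > 0`. -/
lemma travNW (hfp : IsFictitiousPlay vB a b) (s j : ℕ)
    (hA : alphaFP b s < 0) (hBs : (j:ℝ) ≤ betaFP vB a s) :
    (∀ k ≤ j, alphaFP b (s+k) = alphaFP b s - k ∧ betaFP vB a (s+k) = betaFP vB a s - k) ∧
    (∀ k < j, ¬ AxisCrossing vB a b (s+k)) := by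
  have main : ∀ k ≤ j, alphaFP b (s+k) = alphaFP b s - k ∧
      betaFP vB a (s+k) = betaFP vB a s - k := by
    intro k hk
    induction k with
    | zero => simp
    | succ k ih =>
      obtain ⟨hAk, hBk⟩ := ih (by omega)
      have hkj : (k:ℝ) + 1 ≤ j := by exact_mod_cast hk
      have hAneg : alphaFP b (s+k) < 0 := by rw [hAk]; have : (0:ℝ) ≤ k := Nat.cast_nonneg k; linarith
      have hBpos : 0 < betaFP vB a (s+k) := by rw [hBk]; linarith
      have ha0 : a (s+k+1) = 0 := (hfp (s+k)).2.1 hAneg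
      have hbL : b (s+k+1) = Choice.L := (hfp (s+k)).2.2.1 hBpos
      constructor
      · rw [show s+(k+1) = (s+k)+1 by ring, alphaFP_succ, hbL, hAk]
        simp; push_cast; ring
      · rw [show s+(k+1) = (s+k)+1 by ring, betaFP_succ, ha0, cumul_zero, hBk]
        push_cast; ring
  refine ⟨main, fun k hk hcr => ?_⟩
  obtain ⟨hAk, hBk⟩ := main k (le_of_lt hk)
  obtain ⟨_, hBk1⟩ := main (k+1) hk
  have hkj : (k:ℝ) + 1 ≤ j := by exact_mod_cast hk
  have h1 : alphaFP b (s+k) < 0 := by rw [hAk]; have : (0:ℝ) ≤ k := Nat.cast_nonneg k; linarith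
  have h2 : 0 < betaFP vB a (s+k) := by rw [hBk]; linarith
  have h3 : 0 ≤ betaFP vB a (s+k+1) := by
    rw [show s+k+1 = s+(k+1) by ring, hBk1]; push_cast; linarith
  rcases hcr with h | ⟨h, _⟩ | ⟨_, h⟩ <;> linarith

/-- Traversal of the quadrant `α > 0, β < 0`. -/
lemma travSE (hB : IsDensity δ Δ vB) (hfp : IsFictitiousPlay vB a b) (s j : ℕ)
    (hA : 0 < alphaFP b s) (hBs : betaFP vB a s ≤ -(j:ℝ)) :
    (∀ k ≤ j, alphaFP b (s+k) = alphaFP b s + k ∧ betaFP vB a (s+k) = betaFP vB a s + k) ∧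
    (∀ k < j, ¬ AxisCrossing vB a b (s+k)) := by
  have main : ∀ k ≤ j, alphaFP b (s+k) = alphaFP b s + k ∧
      betaFP vB a (s+k) = betaFP vB a s + k := by
    intro k hk
    induction k with
    | zero => simp
    | succ k ih =>
      obtain ⟨hAk, hBk⟩ := ih (by omega)
      have hkj : (k:ℝ) + 1 ≤ j := by exact_mod_cast hk
      have hApos : 0 < alphaFP b (s+k) := by rw [hAk]; have : (0:ℝ) ≤ k := Nat.cast_nonneg k; linarith
      have hBneg : betaFP vB a (s+k) < 0 := by rw [hBk]; linarith
      have ha1 : a (s+k+1) = 1 := (hfp (s+k)).1 hApos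
      have hbR : b (s+k+1) = Choice.R := (hfp (s+k)).2.2.2 hBneg
      constructor
      · rw [show s+(k+1) = (s+k)+1 by ring, alphaFP_succ, hbR, hAk]
        simp; push_cast; ring
      · rw [show s+(k+1) = (s+k)+1 by ring, betaFP_succ, ha1, cumul_one hB, hBk]
        push_cast; ring
  refine ⟨main, fun k hk hcr => ?_⟩
  obtain ⟨hAk, hBk⟩ := main k (le_of_lt hk)
  obtain ⟨_, hBk1⟩ := main (k+1) hk
  have hkj : (k:ℝ) + 1 ≤ j := by exact_mod_cast hk
  have h1 : 0 < alphaFP b (s+k) := by rw [hAk]; have : (0:ℝ) ≤ k := Nat.cast_nonneg k; linarith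
  have h2 : betaFP vB a (s+k) < 0 := by rw [hBk]; linarith
  have h3 : betaFP vB a (s+k+1) ≤ 0 := by
    rw [show s+k+1 = s+(k+1) by ring, hBk1]; push_cast; linarith
  rcases hcr with h | ⟨_, h⟩ | ⟨h, _⟩ <;> linarith

/-- Traversal of the quadrant `α < 0, β < 0`. -/
lemma travSW (hfp : IsFictitiousPlay vB a b) (s j : ℕ)
    (hA : alphaFP b s ≤ -(j:ℝ)) (hBs : betaFP vB a s < 0) :
    (∀ k ≤ j, alphaFP b (s+k) = alphaFP b s + k ∧ betaFP vB a (s+k) = betaFP vB a s - k) ∧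
    (∀ k < j, ¬ AxisCrossing vB a b (s+k)) := by
  have main : ∀ k ≤ j, alphaFP b (s+k) = alphaFP b s + k ∧
      betaFP vB a (s+k) = betaFP vB a s - k := by
    intro k hk
    induction k with
    | zero => simp
    | succ k ih =>
      obtain ⟨hAk, hBk⟩ := ih (by omega)
      have hkj : (k:ℝ) + 1 ≤ j := by exact_mod_cast hk
      have hAneg : alphaFP b (s+k) < 0 := by rw [hAk]; linarith
      have hBneg : betaFP vB a (s+k) < 0 := by
        rw [hBk]; have : (0:ℝ) ≤ k := Nat.cast_nonneg k; linarith
      have ha0 : a (s+k+1) = 0 := (hfp (s+k)).2.1 hAneg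
      have hbR : b (s+k+1) = Choice.R := (hfp (s+k)).2.2.2 hBneg
      constructor
      · rw [show s+(k+1) = (s+k)+1 by ring, alphaFP_succ, hbR, hAk]
        simp; push_cast; ring
      · rw [show s+(k+1) = (s+k)+1 by ring, betaFP_succ, ha0, cumul_zero, hBk]
        push_cast; ring
  refine ⟨main, fun k hk hcr => ?_⟩
  obtain ⟨hAk, hBk⟩ := main k (le_of_lt hk)
  obtain ⟨_, hBk1⟩ := main (k+1) hk
  have hkj : (k:ℝ) + 1 ≤ j := by exact_mod_cast hk
  have h1 : alphaFP b (s+k) < 0 := by rw [hAk]; linarith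
  have h2 : betaFP vB a (s+k) < 0 := by
    rw [hBk]; have : (0:ℝ) ≤ k := Nat.cast_nonneg k; linarith
  have h3 : betaFP vB a (s+k+1) < 0 := by
    rw [show s+k+1 = s+(k+1) by ring, hBk1]; push_cast; linarith
  rcases hcr with h | ⟨_, h⟩ | ⟨h, _⟩ <;> linarith

end Trav
section Gap

variable {δ Δ : ℝ} {vB : ℝ → ℝ} {a : ℕ → ℝ} {b : ℕ → Choice}

lemma alpha_step (b : ℕ → Choice) (t : ℕ) :
    alphaFP b t - 1 ≤ alphaFP b (t+1) ∧ alphaFP b (t+1) ≤ alphaFP b t + 1 := by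
  rw [alphaFP_succ]
  by_cases h : b (t+1) = Choice.R <;> simp [h] <;> linarith

lemma beta_step (hδ : 0 < δ) (hB : IsDensity δ Δ vB)
    (ha : ∀ t : ℕ, 1 ≤ t → a t ∈ Set.Icc (0:ℝ) 1) (t : ℕ) :
    betaFP vB a t - 1 ≤ betaFP vB a (t+1) ∧ betaFP vB a (t+1) ≤ betaFP vB a t + 1 := by
  rw [betaFP_succ]
  have h1 := cumul_nonneg (le_of_lt hδ) hB (ha (t+1) (by omega))
  have h2 := cumul_le_one (le_of_lt hδ) hB (ha (t+1) (by omega))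
  constructor <;> linarith

/-- The key gap lemma: two axis crossings at radius `≥ 2` are far apart. -/
lemma gap (hδ : 0 < δ) (hB : IsDensity δ Δ vB)
    (ha : ∀ t : ℕ, 1 ≤ t → a t ∈ Set.Icc (0:ℝ) 1)
    (hfp : IsFictitiousPlay vB a b) {u w : ℕ}
    (hu : AxisCrossing vB a b u) (hw : AxisCrossing vB a b w)
    (hρ : 2 ≤ rhoFP vB a b u) (huw : u < w) :
    rhoFP vB a b u - 1 ≤ (w:ℝ) - (u:ℝ) := by
  set ρ := rhoFP vB a b u with hρdef
  -- main claim: no crossing at u+1+k for k < ρ - 2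
  have main : ∀ k : ℕ, (k:ℝ) < ρ - 2 → ¬ AxisCrossing vB a b (u+1+k) := by
    intro k hk
    have hbstep := beta_step hδ hB ha u
    have hastep := alpha_step b u
    have hrho : ρ = |alphaFP b u| + |betaFP vB a u| := rfl
    by_cases hA0 : alphaFP b u = 0
    · -- α-axis crossing
      have hBabs : |betaFP vB a u| = ρ := by rw [hrho, hA0]; simp
      rcases lt_trichotomy (betaFP vB a u) 0 with hBneg | hBz | hBpos
      · -- B u < 0, B u = -ρ
        have hBu : betaFP vB a u = -ρ := by rw [← hBabs, abs_of_neg hBneg]; ring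
        have hbR : b (u+1) = Choice.R := (hfp u).2.2.2 hBneg
        have hA1 : alphaFP b (u+1) = 1 := by rw [alphaFP_succ, hbR, hA0]; simp
        have hB1 : betaFP vB a (u+1) ≤ -((k:ℝ)+1) := by
          have := hbstep.2; rw [hBu] at this; linarith
        have := (travSE hB hfp (u+1) (k+1) (by rw [hA1]; norm_num)
          (by push_cast; exact hB1)).2 k (by omega)
        rwa [show u+1+k = (u+1)+k by ring]
      · exfalso; rw [hBz] at hBabs; simp at hBabs; rw [← hBabs] at hρ; norm_num at hρ
      · -- B u > 0, B u = ρ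
        have hBu : betaFP vB a u = ρ := by rw [← hBabs, abs_of_pos hBpos]
        have hbL : b (u+1) = Choice.L := (hfp u).2.2.1 hBpos
        have hA1 : alphaFP b (u+1) = -1 := by rw [alphaFP_succ, hbL, hA0]; simp
        have hB1 : ((k:ℝ)+1) ≤ betaFP vB a (u+1) := by
          have := hbstep.1; rw [hBu] at this; linarith
        have := (travNW hfp (u+1) (k+1) (by rw [hA1]; norm_num)
          (by push_cast; exact hB1)).2 k (by omega)
        rwa [show u+1+k = (u+1)+k by ring]
    · -- β-axis crossing, α u ≠ 0
      rcases hu with h | ⟨hb1, hb2⟩ | ⟨hb1, hb2⟩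
      · exact absurd h hA0
      · -- B u ≤ 0 < B (u+1) : forces α u > 0
        have hApos : 0 < alphaFP b u := by
          rcases lt_or_gt_of_ne hA0 with hneg | hpos
          · exfalso
            have ha0 : a (u+1) = 0 := (hfp u).2.1 hneg
            have : betaFP vB a (u+1) = betaFP vB a u - 1 := by
              rw [betaFP_succ, ha0, cumul_zero]; ring
            linarith
          · exact hpos
        have ha1 : a (u+1) = 1 := (hfp u).1 hApos
        have hBsucc : betaFP vB a (u+1) = betaFP vB a u + 1 := by
          rw [betaFP_succ, ha1, cumul_one hB]; ring
        have hAu : alphaFP b u = ρ + betaFP vB a u := by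
          rw [hrho, abs_of_pos hApos, abs_of_nonpos hb1]; ring
        have hA1 : ρ - 1 ≤ alphaFP b (u+1) := by
          rcases lt_or_eq_of_le hb1 with hBneg | hBz
          · have hbR : b (u+1) = Choice.R := (hfp u).2.2.2 hBneg
            have : alphaFP b (u+1) = alphaFP b u + 1 := by
              rw [alphaFP_succ, hbR]; simp
            rw [this, hAu]; linarith
          · have h1 := hastep.1
            rw [hAu] at h1
            rw [hBz] at h1
            linarith
        have hB1 : 0 < betaFP vB a (u+1) := hb2
        have := (travNE hB hfp (u+1) (k+1)
          (by push_cast; linarith) hB1).2 k (by omega)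
        rwa [show u+1+k = (u+1)+k by ring]
      · -- 0 ≤ B u, B (u+1) < 0 : forces α u < 0
        have hAneg : alphaFP b u < 0 := by
          rcases lt_or_gt_of_ne hA0 with hneg | hpos
          · exact hneg
          · exfalso
            have ha1 : a (u+1) = 1 := (hfp u).1 hpos
            have : betaFP vB a (u+1) = betaFP vB a u + 1 := by
              rw [betaFP_succ, ha1, cumul_one hB]; ring
            linarith
        have ha0 : a (u+1) = 0 := (hfp u).2.1 hAneg
        have hBsucc : betaFP vB a (u+1) = betaFP vB a u - 1 := by
          rw [betaFP_succ, ha0, cumul_zero]; ring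
        have hAu : alphaFP b u = -(ρ - betaFP vB a u) := by
          rw [hrho, abs_of_neg hAneg, abs_of_nonneg hb1]; ring
        have hA1 : alphaFP b (u+1) ≤ -(ρ - 1) := by
          rcases lt_or_eq_of_le hb1 with hBpos | hBz
          · have hbL : b (u+1) = Choice.L := (hfp u).2.2.1 hBpos
            have : alphaFP b (u+1) = alphaFP b u - 1 := by
              rw [alphaFP_succ, hbL]; simp; ring
            rw [this, hAu]; linarith
          · have h1 := hastep.2
            rw [hAu] at h1
            rw [← hBz] at h1
            linarith
        have hB1 : betaFP vB a (u+1) < 0 := hb2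
        have := (travSW hfp (u+1) (k+1)
          (by push_cast; linarith) hB1).2 k (by omega)
        rwa [show u+1+k = (u+1)+k by ring]
  by_contra hlt
  push_neg at hlt
  have hk : w = u + 1 + (w - u - 1) := by omega
  apply main (w - u - 1) _ (hk ▸ hw)
  have hc : ((w - u - 1 : ℕ) : ℝ) = (w:ℝ) - u - 1 := by
    push_cast [Nat.cast_sub (by omega : 1 ≤ w - u), Nat.cast_sub (le_of_lt huw)]
    ring
  rw [hc]; linarith
section Const

variable {δ Δ : ℝ} {vB : ℝ → ℝ} {a : ℕ → ℝ} {b : ℕ → Choice}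

lemma rho_const_step (hB : IsDensity δ Δ vB) (hfp : IsFictitiousPlay vB a b) {t : ℕ}
    (h : ¬ AxisCrossing vB a b t) :
    rhoFP vB a b (t+1) = rhoFP vB a b t := by
  unfold AxisCrossing at h
  push_neg at h
  obtain ⟨h1, h2, h3⟩ := h
  obtain ⟨kk, hkk⟩ := alphaFP_int b t
  rcases lt_or_gt_of_ne h1 with hAneg | hApos
  · -- α < 0, hence α ≤ -1
    have hAle : alphaFP b t ≤ -1 := by
      have hkneg : kk < 0 := by rw [hkk] at hAneg; exact_mod_cast hAneg
      have hk1 : kk ≤ -1 := by omega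
      rw [hkk]; exact_mod_cast hk1
    have ha0 : a (t+1) = 0 := (hfp t).2.1 hAneg
    have hBsucc : betaFP vB a (t+1) = betaFP vB a t - 1 := by
      rw [betaFP_succ, ha0, cumul_zero]; ring
    rcases lt_trichotomy (betaFP vB a t) 0 with hBneg | hBz | hBpos
    · have hbR : b (t+1) = Choice.R := (hfp t).2.2.2 hBneg
      have hAsucc : alphaFP b (t+1) = alphaFP b t + 1 := by
        rw [alphaFP_succ, hbR]; simp
      unfold rhoFP
      rw [hAsucc, hBsucc, abs_of_neg hAneg, abs_of_neg hBneg,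
        abs_of_nonpos (show alphaFP b t + 1 ≤ 0 by linarith),
        abs_of_neg (show betaFP vB a t - 1 < 0 by linarith)]
      ring
    · exfalso
      have := h3 (le_of_eq hBz.symm)
      rw [hBsucc, hBz] at this
      linarith
    · have hB1 : 0 ≤ betaFP vB a (t+1) := h3 (le_of_lt hBpos)
      rw [hBsucc] at hB1
      have hbL : b (t+1) = Choice.L := (hfp t).2.2.1 hBpos
      have hAsucc : alphaFP b (t+1) = alphaFP b t - 1 := by
        rw [alphaFP_succ, hbL]; simp; ring
      unfold rhoFP
      rw [hAsucc, hBsucc, abs_of_neg hAneg, abs_of_pos hBpos,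
        abs_of_neg (show alphaFP b t - 1 < 0 by linarith),
        abs_of_nonneg (show (0:ℝ) ≤ betaFP vB a t - 1 from hB1)]
      ring
  · -- α > 0, hence 1 ≤ α
    have hAge : 1 ≤ alphaFP b t := by
      have hkpos : 0 < kk := by rw [hkk] at hApos; exact_mod_cast hApos
      have hk1 : 1 ≤ kk := by omega
      rw [hkk]; exact_mod_cast hk1
    have ha1 : a (t+1) = 1 := (hfp t).1 hApos
    have hBsucc : betaFP vB a (t+1) = betaFP vB a t + 1 := by
      rw [betaFP_succ, ha1, cumul_one hB]; ring
    rcases lt_trichotomy (betaFP vB a t) 0 with hBneg | hBz | hBpos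
    · have hB1 : betaFP vB a (t+1) ≤ 0 := h2 (le_of_lt hBneg)
      rw [hBsucc] at hB1
      have hbR : b (t+1) = Choice.R := (hfp t).2.2.2 hBneg
      have hAsucc : alphaFP b (t+1) = alphaFP b t + 1 := by
        rw [alphaFP_succ, hbR]; simp
      unfold rhoFP
      rw [hAsucc, hBsucc, abs_of_pos hApos, abs_of_neg hBneg,
        abs_of_pos (show (0:ℝ) < alphaFP b t + 1 by linarith),
        abs_of_nonpos (show betaFP vB a t + 1 ≤ 0 from hB1)]
      ring
    · exfalso
      have := h2 (le_of_eq hBz)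
      rw [hBsucc, hBz] at this
      linarith
    · have hbL : b (t+1) = Choice.L := (hfp t).2.2.1 hBpos
      have hAsucc : alphaFP b (t+1) = alphaFP b t - 1 := by
        rw [alphaFP_succ, hbL]; simp; ring
      unfold rhoFP
      rw [hAsucc, hBsucc, abs_of_pos hApos, abs_of_pos hBpos,
        abs_of_nonneg (show (0:ℝ) ≤ alphaFP b t - 1 by linarith),
        abs_of_pos (show (0:ℝ) < betaFP vB a t + 1 by linarith)]
      ring

lemma rho_const_of_nocross (hB : IsDensity δ Δ vB) (hfp : IsFictitiousPlay vB a b)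
    {s T : ℕ} (hsT : s ≤ T)
    (h : ∀ v, s ≤ v → v < T → ¬ AxisCrossing vB a b v) :
    rhoFP vB a b T = rhoFP vB a b s := by
  induction T, hsT using Nat.le_induction with
  | base => rfl
  | succ T hT ih =>
    rw [rho_const_step hB hfp (h T hT (by omega))]
    exact ih (fun v hv1 hv2 => h v hv1 (by omega))

end Const
/-- If `n ≥ 7` and `t_1 < … < t_n` are rounds with
`ρ_{t_{i+1}} ≥ ⌊ρ_{t_i}⌋ + 1` for each `i`, then `t_n − t_1 > n²/10`. -/
theorem many_radius_increases_take_time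
    (δ Δ : ℝ) (hδ : 0 < δ) (hδΔ : δ ≤ Δ)
    (vA vB : ℝ → ℝ) (hA : IsDensity δ Δ vA) (hB : IsDensity δ Δ vB)
    (a : ℕ → ℝ) (b : ℕ → Choice)
    (ha : ∀ t : ℕ, 1 ≤ t → a t ∈ Set.Icc (0:ℝ) 1)
    (hfp : IsFictitiousPlay vB a b)
    (n : ℕ) (hn : 7 ≤ n) (t : ℕ → ℕ)
    (hmono : ∀ i : ℕ, 1 ≤ i → i < n → t i < t (i+1))
    (hinc : ∀ i : ℕ, 1 ≤ i → i < n →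
      (⌊rhoFP vB a b (t i)⌋ : ℝ) + 1 ≤ rhoFP vB a b (t (i+1))) :
    (n : ℝ) ^ 2 / 10 < (t n : ℝ) - (t 1 : ℝ) := by
  classical
  have hrho_nonneg : ∀ m : ℕ, 0 ≤ rhoFP vB a b m :=
    fun m => add_nonneg (abs_nonneg _) (abs_nonneg _)
  -- `⌊ρ(t i)⌋ ≥ i - 1`
  have hfloor : ∀ i : ℕ, 1 ≤ i → i ≤ n → ((i:ℤ) - 1) ≤ ⌊rhoFP vB a b (t i)⌋ := by
    intro i h1 h2
    induction i with
    | zero => omega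
    | succ i ih =>
      rcases Nat.lt_or_ge 1 (i+1) with h | h
      · have hi1 : 1 ≤ i := by omega
        have hprev := ih hi1 (by omega)
        have hstep : ⌊rhoFP vB a b (t i)⌋ + 1 ≤ ⌊rhoFP vB a b (t (i+1))⌋ :=
          Int.le_floor.mpr (by push_cast; exact hinc i hi1 (by omega))
        push_cast
        push_cast at hprev
        omega
      · have hi0 : i = 0 := by omega
        subst hi0
        have := Int.floor_nonneg.mpr (hrho_nonneg (t 1))
        simpa using this
  have hrho_lb : ∀ i : ℕ, 1 ≤ i → i ≤ n → (i:ℝ) - 1 ≤ rhoFP vB a b (t i) := by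
    intro i h1 h2
    have hfl := hfloor i h1 h2
    have hfle := Int.floor_le (rhoFP vB a b (t i))
    have hc : ((i:ℝ) - 1) ≤ (⌊rhoFP vB a b (t i)⌋ : ℝ) := by exact_mod_cast hfl
    linarith
  -- there is a crossing in `[t i, t (i+1))`, and the first one keeps the radius
  have hstrong : ∀ i : ℕ, 1 ≤ i → i < n → ∃ m : ℕ, t i ≤ m ∧ m < t (i+1) ∧
      AxisCrossing vB a b m ∧ rhoFP vB a b m = rhoFP vB a b (t i) := by
    intro i h1 h2
    have hex : ∃ m : ℕ, t i ≤ m ∧ m < t (i+1) ∧ AxisCrossing vB a b m := by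
      by_contra hno
      push_neg at hno
      have heq := rho_const_of_nocross hB hfp (le_of_lt (hmono i h1 h2))
        (fun v hv1 hv2 => hno v hv1 hv2)
      have hi := hinc i h1 h2
      rw [heq] at hi
      have := Int.lt_floor_add_one (rhoFP vB a b (t i))
      linarith
    obtain ⟨m0, hm0⟩ := hex
    have hexP : ∃ m, t i ≤ m ∧ AxisCrossing vB a b m := ⟨m0, hm0.1, hm0.2.2⟩
    refine ⟨Nat.find hexP, (Nat.find_spec hexP).1, ?_, (Nat.find_spec hexP).2, ?_⟩
    · exact lt_of_le_of_lt (Nat.find_min' hexP ⟨hm0.1, hm0.2.2⟩) hm0.2.1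
    · exact rho_const_of_nocross hB hfp (Nat.find_spec hexP).1
        (fun v hv1 hv2 hc => Nat.find_min hexP hv2 ⟨hv1, hc⟩)
  choose u hu1 hu2 hu3 hu4 using hstrong
  set U : ℕ → ℕ := fun i => if h : 1 ≤ i ∧ i < n then u i h.1 h.2 else 0 with hUdef
  have hUeq : ∀ i (h1 : 1 ≤ i) (h2 : i < n), U i = u i h1 h2 := by
    intro i h1 h2
    simp only [hUdef, dif_pos (show 1 ≤ i ∧ i < n from ⟨h1, h2⟩)]
  have hU_ge : ∀ i, 1 ≤ i → i < n → t i ≤ U i := fun i h1 h2 => by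
    rw [hUeq i h1 h2]; exact hu1 i h1 h2
  have hU_lt : ∀ i, 1 ≤ i → i < n → U i < t (i+1) := fun i h1 h2 => by
    rw [hUeq i h1 h2]; exact hu2 i h1 h2
  have hU_cross : ∀ i, 1 ≤ i → i < n → AxisCrossing vB a b (U i) := fun i h1 h2 => by
    rw [hUeq i h1 h2]; exact hu3 i h1 h2
  have hU_rho : ∀ i, 1 ≤ i → i < n → rhoFP vB a b (U i) = rhoFP vB a b (t i) :=
    fun i h1 h2 => by rw [hUeq i h1 h2]; exact hu4 i h1 h2
  -- each consecutive pair of chosen crossings is far apart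
  have hstep : ∀ m : ℕ, 1 ≤ m → m + 1 < n → (m:ℝ) - 2 ≤ (U (m+1) : ℝ) - (U m : ℝ) := by
    intro m h1 h2
    have hlt : U m < U (m+1) :=
      lt_of_lt_of_le (hU_lt m h1 (by omega)) (hU_ge (m+1) (by omega) h2)
    by_cases h3 : m ≤ 3
    · have hlt' : (U m : ℝ) + 1 ≤ U (m+1) := by exact_mod_cast hlt
      have hm3 : (m:ℝ) ≤ 3 := by exact_mod_cast h3
      linarith
    · have hm4 : (4:ℝ) ≤ (m:ℝ) := by exact_mod_cast (by omega : 4 ≤ m)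
      have hrlb := hrho_lb m h1 (by omega)
      have hρ2 : 2 ≤ rhoFP vB a b (U m) := by
        rw [hU_rho m h1 (by omega)]; linarith
      have hgap := gap hδ hB ha hfp (hU_cross m h1 (by omega))
        (hU_cross (m+1) (by omega) h2) hρ2 hlt
      rw [hU_rho m h1 (by omega)] at hgap
      linarith
  -- sum up the gaps
  have hind : ∀ m : ℕ, 1 ≤ m → m < n →
      (U 1 : ℝ) + ((m:ℝ) - 1) * ((m:ℝ) - 4) / 2 ≤ (U m : ℝ) := by
    intro m h1 h2
    induction m with
    | zero => omega
    | succ m ih =>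
      rcases Nat.lt_or_ge 1 (m+1) with h | h
      · have hm1 : 1 ≤ m := by omega
        have hprev := ih hm1 (by omega)
        have hs := hstep m hm1 h2
        push_cast
        push_cast at hprev
        nlinarith [hprev, hs]
      · have hm0 : m = 0 := by omega
        subst hm0
        push_cast
        norm_num
  have hfin := hind (n-1) (by omega) (by omega)
  have hun : (U (n-1) : ℝ) + 1 ≤ (t n : ℝ) := by
    have h := hU_lt (n-1) (by omega) (by omega)
    rw [show n - 1 + 1 = n by omega] at h
    exact_mod_cast h
  have hu1t : (t 1 : ℝ) ≤ U 1 := by exact_mod_cast hU_ge 1 (by omega) (by omega)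
  have hcast : ((n-1 : ℕ):ℝ) = (n:ℝ) - 1 := by
    push_cast [Nat.cast_sub (show 1 ≤ n by omega)]
    ring
  rw [hcast] at hfin
  have hn7 : (7:ℝ) ≤ (n:ℝ) := by exact_mod_cast hn
  have key : 0 ≤ ((n:ℝ) - 7) * (4*(n:ℝ) - 7) :=
    mul_nonneg (by linarith) (by linarith)
  nlinarith [hfin, hun, hu1t, key]
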